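/- Let V and V' be finite types, let F be a nonempty superset-closed family of finsets of V such that every subset of V of cardinality |V| − 1 belongs to F, and let F' be a nonempty superset-closed family of finsets of V' such that every subset of V' of cardinality |V'| − 1 belongs to F'. Suppose φ is a graph isomorphism from the TAR graph of F to the TAR graph of F'. Then |V| = |V'|, the finset R' = Finset.univ \ φ(Finset.univ) (complement in V' of the image of the full vertex set of V) is disjoint from every minimal member of F', and the map S ↦ φ(S) △ R' is a graph isomorphism from the TAR graph of F to the TAR graph of F' satisfying |φ(S) △ R'| = |S| for every S ∈ F. -/

import Mathlib

variable {V : Type*} [Fintype V] [DecidableEq V]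

/-- A family of finsets is superset-closed if it is closed under taking supersets. -/
def SupersetClosed (F : Finset (Finset V)) : Prop :=
  ∀ ⦃S T : Finset V⦄, S ∈ F → S ⊆ T → T ∈ F

/-- A minimal member of a family: a member no proper subset of which is a member. -/
def IsMinimalMem (F : Finset (Finset V)) (M : Finset V) : Prop :=
  M ∈ F ∧ ∀ M' : Finset V, M' ⊂ M → M' ∉ F

/-- The TAR graph of a family of finsets: vertices are the members of the family,
two members being adjacent iff their symmetric difference has exactly one element. -/
def TARGraph (F : Finset (Finset V)) : SimpleGraph {S : Finset V // S ∈ F} where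
  Adj S T := (symmDiff S.1 T.1).card = 1
  symm := ⟨fun S T (h : (symmDiff S.1 T.1).card = 1) =>
    show (symmDiff T.1 S.1).card = 1 by rwa [symmDiff_comm] at h⟩
  loopless := ⟨fun S (h : (symmDiff S.1 S.1).card = 1) => by simp [symmDiff_self] at h⟩

instance (F : Finset (Finset V)) : DecidableRel (TARGraph F).Adj :=
  fun S T => inferInstanceAs (Decidable ((symmDiff S.1 T.1).card = 1))

lemma univ_mem {F : Finset (Finset V)} (hne : F.Nonempty) (hsup : SupersetClosed F) :
    (Finset.univ : Finset V) ∈ F :=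
  hsup hne.choose_spec (Finset.subset_univ _)

set_option maxHeartbeats 1000000
set_option linter.unusedSectionVars false

-- erase identity
lemma symmDiff_single_of_mem {A B : Finset V} {x : V} (hx : x ∈ symmDiff A B) :
    symmDiff (symmDiff A {x}) B = (symmDiff A B).erase x := by
  ext a
  simp only [Finset.mem_symmDiff, Finset.mem_erase, Finset.mem_singleton] at *
  by_cases h : a = x <;> subst_eqs <;> tauto

lemma symmDiff_single_spec {A : Finset V} {x : V} :
    symmDiff A (symmDiff A {x}) = {x} := symmDiff_symmDiff_cancel_left A {x}

lemma insert_eq_symmDiff_single {A : Finset V} {x : V} (hx : x ∉ A) :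
    insert x A = symmDiff A {x} := by
  ext a
  simp only [Finset.mem_symmDiff, Finset.mem_insert, Finset.mem_singleton]
  by_cases h : a = x <;> subst_eqs <;> tauto

lemma card_symmDiff_le_walk {F : Finset (Finset V)} {S T : {S : Finset V // S ∈ F}}
    (W : (TARGraph F).Walk S T) : (symmDiff S.1 T.1).card ≤ W.length := by
  induction W with
  | nil => simp [symmDiff_self]
  | cons h p ih =>
    rename_i u v w
    have htri := symmDiff_triangle u.1 v.1 w.1
    have h1 : (symmDiff u.1 v.1).card = 1 := h
    calc (symmDiff u.1 w.1).card ≤ (symmDiff u.1 v.1 ∪ symmDiff v.1 w.1).card :=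
          Finset.card_le_card htri
      _ ≤ (symmDiff u.1 v.1).card + (symmDiff v.1 w.1).card := Finset.card_union_le _ _
      _ ≤ 1 + p.length := by omega
      _ = (SimpleGraph.Walk.cons h p).length := by rw [SimpleGraph.Walk.length_cons]; omega

lemma exists_walk {F : Finset (Finset V)} (hsup : SupersetClosed F) :
    ∀ (n : ℕ) (S T : {S : Finset V // S ∈ F}), (symmDiff S.1 T.1).card = n →
    ∃ W : (TARGraph F).Walk S T, W.length = n := by
  intro n
  induction n using Nat.strong_induction_on with
  | _ n ih =>
    intro S T h
    rcases n with _ | m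
    · have : S = T := Subtype.ext (by
        have := Finset.card_eq_zero.mp h
        rwa [← Finset.bot_eq_empty, symmDiff_eq_bot] at this)
      subst this
      exact ⟨SimpleGraph.Walk.nil, rfl⟩
    · have hne : (symmDiff S.1 T.1).Nonempty := Finset.card_pos.mp (by omega)
      -- choose x ∈ symmDiff with S' := symmDiff S {x} ∈ F
      have hkey : ∃ x ∈ symmDiff S.1 T.1, symmDiff S.1 {x} ∈ F := by
        by_cases hTS : (T.1 \ S.1).Nonempty
        · obtain ⟨x, hx⟩ := hTS
          rw [Finset.mem_sdiff] at hx
          refine ⟨x, Finset.mem_symmDiff.mpr (Or.inr ⟨hx.1, hx.2⟩), hsup S.2 ?_⟩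
          intro a ha
          exact Finset.mem_symmDiff.mpr (Or.inl ⟨ha, by
            simp only [Finset.mem_singleton]; rintro rfl; exact hx.2 ha⟩)
        · obtain ⟨x, hx⟩ := hne
          rw [Finset.mem_symmDiff] at hx
          have hx' : x ∈ S.1 ∧ x ∉ T.1 := by
            rcases hx with h' | h'
            · exact h'
            · exact absurd ⟨x, Finset.mem_sdiff.mpr ⟨h'.1, h'.2⟩⟩ hTS
          refine ⟨x, Finset.mem_symmDiff.mpr (Or.inl hx'), hsup T.2 ?_⟩
          intro a ha
          have haS : a ∈ S.1 := by
            by_contra haS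
            exact hTS ⟨a, Finset.mem_sdiff.mpr ⟨ha, haS⟩⟩
          exact Finset.mem_symmDiff.mpr (Or.inl ⟨haS, by
            simp only [Finset.mem_singleton]; rintro rfl; exact hx'.2 ha⟩)
      obtain ⟨x, hx, hmem⟩ := hkey
      set S' : {S : Finset V // S ∈ F} := ⟨symmDiff S.1 {x}, hmem⟩ with hS'
      have hadj : (TARGraph F).Adj S S' := by
        show (symmDiff S.1 S'.1).card = 1
        rw [hS', symmDiff_single_spec]
        simp
      have hc : (symmDiff S'.1 T.1).card = m := by
        rw [hS', symmDiff_single_of_mem hx, Finset.card_erase_of_mem hx, h]; omega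
      obtain ⟨W, hW⟩ := ih m (by omega) S' T hc
      exact ⟨SimpleGraph.Walk.cons hadj W, by rw [SimpleGraph.Walk.length_cons, hW]⟩

lemma iso_symmDiff_le {V' : Type*} [Fintype V'] [DecidableEq V']
    {F : Finset (Finset V)} {F' : Finset (Finset V')} (hsup : SupersetClosed F)
    (φ : TARGraph F ≃g TARGraph F') (S T : {S : Finset V // S ∈ F}) :
    (symmDiff (φ S).1 (φ T).1).card ≤ (symmDiff S.1 T.1).card := by
  obtain ⟨W, hW⟩ := exists_walk hsup _ S T rfl
  have := card_symmDiff_le_walk (W.map φ.toHom)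
  rwa [SimpleGraph.Walk.length_map, hW] at this

lemma iso_symmDiff_eq {V' : Type*} [Fintype V'] [DecidableEq V']
    {F : Finset (Finset V)} {F' : Finset (Finset V')} (hsup : SupersetClosed F)
    (hsup' : SupersetClosed F')
    (φ : TARGraph F ≃g TARGraph F') (S T : {S : Finset V // S ∈ F}) :
    (symmDiff (φ S).1 (φ T).1).card = (symmDiff S.1 T.1).card := by
  refine le_antisymm (iso_symmDiff_le hsup φ S T) ?_
  have := iso_symmDiff_le hsup' φ.symm (φ S) (φ T)
  rwa [RelIso.symm_apply_apply, RelIso.symm_apply_apply] at this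

lemma exists_minimal {F : Finset (Finset V)} {T : Finset V} (hT : T ∈ F) :
    ∃ M, M ⊆ T ∧ IsMinimalMem F M := by
  obtain ⟨M, hM, hmin⟩ := Finset.exists_min_image (F.filter (· ⊆ T)) Finset.card
    ⟨T, by simp [hT]⟩
  simp only [Finset.mem_filter] at hM
  refine ⟨M, hM.2, hM.1, ?_⟩
  intro M' hss hM'
  have := hmin M' (by simp only [Finset.mem_filter]; exact ⟨hM', hss.subset.trans hM.2⟩)
  exact absurd this (not_le.mpr (Finset.card_lt_card hss))

lemma erase_eq_symmDiff_single {A : Finset V} {x : V} (hx : x ∈ A) :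
    A.erase x = symmDiff A {x} := by
  ext a
  simp only [Finset.mem_symmDiff, Finset.mem_erase, Finset.mem_singleton]
  by_cases h : a = x <;> subst_eqs <;> tauto

lemma symmDiff_insert_self {A : Finset V} {x : V} (hx : x ∉ A) :
    symmDiff (insert x A) A = {x} := by
  rw [insert_eq_symmDiff_single hx, symmDiff_comm, symmDiff_symmDiff_cancel_left]

lemma symmDiff_univ_eq_compl (A : Finset V) : symmDiff A Finset.univ = Aᶜ := by
  rw [← Finset.top_eq_univ, symmDiff_top, hnot_eq_compl]

lemma symmDiff_compl_eq (A B : Finset V) : symmDiff A Bᶜ = (symmDiff A B)ᶜ := by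
  ext a
  simp only [Finset.mem_symmDiff, Finset.mem_compl]
  tauto

lemma card_le_of_iso {V' : Type*} [Fintype V'] [DecidableEq V']
    {F : Finset (Finset V)} {F' : Finset (Finset V')}
    (hne : F.Nonempty) (hsup : SupersetClosed F)
    (hn1 : ∀ S : Finset V, S.card = Fintype.card V - 1 → S ∈ F)
    (φ : TARGraph F ≃g TARGraph F') :
    Fintype.card V ≤ Fintype.card V' := by
  classical
  have hUmem := univ_mem hne hsup
  set Utop : {S : Finset V // S ∈ F} := ⟨Finset.univ, hUmem⟩ with hUtop
  have gmem : ∀ x : V, Finset.univ.erase x ∈ F := fun x =>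
    hn1 _ (by rw [Finset.card_erase_of_mem (Finset.mem_univ x), Finset.card_univ])
  have key : ∀ x : V, ∃ y : V',
      symmDiff (φ ⟨Finset.univ.erase x, gmem x⟩).1 (φ Utop).1 = {y} := by
    intro x
    have hsd : symmDiff (Finset.univ.erase x) (Utop.1) = {x} := by
      show symmDiff (Finset.univ.erase x) Finset.univ = {x}
      rw [erase_eq_symmDiff_single (Finset.mem_univ x), symmDiff_comm,
        symmDiff_symmDiff_cancel_left]
    have hle : (symmDiff (φ ⟨Finset.univ.erase x, gmem x⟩).1 (φ Utop).1).card ≤ 1 := by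
      have := iso_symmDiff_le hsup φ ⟨Finset.univ.erase x, gmem x⟩ Utop
      rwa [hsd, Finset.card_singleton] at this
    have hne2 : (φ ⟨Finset.univ.erase x, gmem x⟩).1 ≠ (φ Utop).1 := by
      intro h
      have := φ.injective (Subtype.ext h)
      have h2 : Finset.univ.erase x = (Utop.1 : Finset V) := congrArg Subtype.val this
      have : x ∈ Finset.univ.erase x := by
        rw [h2]; exact Finset.mem_univ x
      exact (Finset.notMem_erase x _) this
    have hpos : 0 < (symmDiff (φ ⟨Finset.univ.erase x, gmem x⟩).1 (φ Utop).1).card := by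
      rw [Finset.card_pos]
      rw [Finset.nonempty_iff_ne_empty]
      intro h
      rw [← Finset.bot_eq_empty, symmDiff_eq_bot] at h
      exact hne2 h
    exact Finset.card_eq_one.mp (le_antisymm hle hpos)
  choose f hf using key
  have hinj : Function.Injective f := by
    intro x1 x2 heq
    have h1 := hf x1
    have h2 := hf x2
    rw [heq] at h1
    have hAB : (φ ⟨Finset.univ.erase x1, gmem x1⟩).1 = (φ ⟨Finset.univ.erase x2, gmem x2⟩).1 := by
      have e1 : (φ ⟨Finset.univ.erase x1, gmem x1⟩).1
          = symmDiff ({f x2} : Finset V') (φ Utop).1 := by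
        rw [← h1, symmDiff_symmDiff_cancel_right]
      have e2 : (φ ⟨Finset.univ.erase x2, gmem x2⟩).1
          = symmDiff ({f x2} : Finset V') (φ Utop).1 := by
        rw [← h2, symmDiff_symmDiff_cancel_right]
      rw [e1, e2]
    have := φ.injective (Subtype.ext hAB)
    have h3 : Finset.univ.erase x1 = Finset.univ.erase x2 := congrArg Subtype.val this
    by_contra hxy
    have : x1 ∈ Finset.univ.erase x2 := Finset.mem_erase.mpr ⟨hxy, Finset.mem_univ x1⟩
    rw [← h3] at this
    exact (Finset.notMem_erase x1 _) this
  exact Fintype.card_le_of_injective f hinj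

theorem stmt7 {V' : Type*} [Fintype V'] [DecidableEq V']
    (F : Finset (Finset V)) (hne : F.Nonempty) (hsup : SupersetClosed F)
    (hn1 : ∀ S : Finset V, S.card = Fintype.card V - 1 → S ∈ F)
    (F' : Finset (Finset V')) (hne' : F'.Nonempty) (hsup' : SupersetClosed F')
    (hn1' : ∀ S : Finset V', S.card = Fintype.card V' - 1 → S ∈ F')
    (φ : TARGraph F ≃g TARGraph F') :
    Fintype.card V = Fintype.card V' ∧
    (∀ M' : Finset V', IsMinimalMem F' M' →
      Disjoint ((φ ⟨Finset.univ, univ_mem hne hsup⟩).1)ᶜ M') ∧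
    ∃ ψ : TARGraph F ≃g TARGraph F',
      ∀ S : {S : Finset V // S ∈ F},
        (ψ S).1 = symmDiff (φ S).1 ((φ ⟨Finset.univ, univ_mem hne hsup⟩).1)ᶜ ∧
        (ψ S).1.card = S.1.card := by
  classical
  have hc1 : Fintype.card V ≤ Fintype.card V' := card_le_of_iso hne hsup hn1 φ
  have hc2 : Fintype.card V' ≤ Fintype.card V := card_le_of_iso hne' hsup' hn1' φ.symm
  have hcard : Fintype.card V = Fintype.card V' := le_antisymm hc1 hc2
  set Utop : {S : Finset V // S ∈ F} := ⟨Finset.univ, univ_mem hne hsup⟩ with hUtop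
  set U' : Finset V' := (φ Utop).1 with hU'
  have hdist : ∀ S : {S : Finset V // S ∈ F},
      (symmDiff (φ S).1 U').card = Fintype.card V - S.1.card := by
    intro S
    have := iso_symmDiff_eq hsup hsup' φ S Utop
    rw [hU']
    rw [this]
    show (symmDiff S.1 Finset.univ).card = _
    rw [symmDiff_univ_eq_compl, Finset.card_compl]
  -- every minimal member is contained in U'
  have MsubU' : ∀ M' : Finset V', IsMinimalMem F' M' → M' ⊆ U' := by
    intro M' hM'
    set S : {S : Finset V // S ∈ F} := φ.symm ⟨M', hM'.1⟩ with hS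
    have hφS : φ S = ⟨M', hM'.1⟩ := RelIso.apply_symm_apply φ _
    have hdM : (symmDiff M' U').card = Fintype.card V - S.1.card := by
      have := hdist S
      rw [hφS] at this
      exact this
    have hmemins : ∀ z : V, insert z S.1 ∈ F := fun z => hsup S.2 (Finset.subset_insert z S.1)
    have key2 : ∀ z ∈ (S.1)ᶜ, ∃ y, y ∈ U' \ M' ∧
        (φ ⟨insert z S.1, hmemins z⟩).1 = insert y M' := by
      intro z hz
      rw [Finset.mem_compl] at hz
      have h1 : (symmDiff (φ ⟨insert z S.1, hmemins z⟩).1 M').card = 1 := by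
        have h := iso_symmDiff_eq hsup hsup' φ ⟨insert z S.1, hmemins z⟩ S
        rw [hφS] at h
        have h2 : (symmDiff (insert z S.1) S.1).card = 1 := by
          rw [symmDiff_insert_self hz, Finset.card_singleton]
        exact h.trans h2
      obtain ⟨y, hy⟩ := Finset.card_eq_one.mp h1
      have hNe : (φ ⟨insert z S.1, hmemins z⟩).1 = symmDiff M' {y} := by
        have hc := congrArg (fun A => symmDiff A M') hy
        rw [symmDiff_symmDiff_cancel_right] at hc
        rw [hc, symmDiff_comm]
      have hyM : y ∉ M' := by
        intro hyM
        have hsub : M'.erase y ⊂ M' := Finset.erase_ssubset hyM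
        have : M'.erase y ∈ F' := by
          rw [erase_eq_symmDiff_single hyM, ← hNe]
          exact (φ ⟨insert z S.1, hmemins z⟩).2
        exact hM'.2 _ hsub this
      have hNi : (φ ⟨insert z S.1, hmemins z⟩).1 = insert y M' := by
        rw [hNe, ← insert_eq_symmDiff_single hyM]
      have hyU : y ∈ U' := by
        by_contra hyU
        have hd2 := hdist ⟨insert z S.1, hmemins z⟩
        rw [hNi] at hd2
        have hins : (insert z S.1).card = S.1.card + 1 := Finset.card_insert_of_notMem hz
        rw [hins] at hd2
        have hysd : y ∉ symmDiff M' U' := by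
          rw [Finset.mem_symmDiff]
          tauto
        have hcomm : symmDiff (insert y M') U' = insert y (symmDiff M' U') := by
          rw [insert_eq_symmDiff_single hyM, insert_eq_symmDiff_single hysd,
            symmDiff_right_comm]
        rw [hcomm, Finset.card_insert_of_notMem hysd, hdM] at hd2
        have hle : S.1.card + 1 ≤ Fintype.card V := by
          have := Finset.card_le_univ (insert z S.1)
          rwa [hins] at this
        omega
      exact ⟨y, Finset.mem_sdiff.mpr ⟨hyU, hyM⟩, hNi⟩
    have hcount : ((S.1)ᶜ).card ≤ (U' \ M').card := by
      rcases Finset.eq_empty_or_nonempty ((S.1)ᶜ) with he | hne2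
      · simp [he]
      · obtain ⟨z0, hz0⟩ := hne2
        obtain ⟨y0, hy0, -⟩ := key2 z0 hz0
        have : Nonempty V' := ⟨y0⟩
        refine Finset.card_le_card_of_injOn
          (fun z => if hz : z ∈ (S.1)ᶜ then (key2 z hz).choose else Classical.arbitrary V')
          ?_ ?_
        · intro z hz
          rw [Finset.mem_coe] at hz ⊢
          simp only [dif_pos hz]
          exact ((key2 z hz).choose_spec).1
        · intro z1 h1 z2 h2 heq
          rw [Finset.mem_coe] at h1 h2
          simp only [dif_pos h1, dif_pos h2] at heq
          have s1 := ((key2 z1 h1).choose_spec).2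
          have s2 := ((key2 z2 h2).choose_spec).2
          rw [heq] at s1
          have hval : (φ ⟨insert z1 S.1, hmemins z1⟩) = (φ ⟨insert z2 S.1, hmemins z2⟩) :=
            Subtype.ext (s1.trans s2.symm)
          have := φ.injective hval
          have hii : insert z1 S.1 = insert z2 S.1 := congrArg Subtype.val this
          have hz1' : z1 ∈ insert z2 S.1 := hii ▸ Finset.mem_insert_self z1 S.1
          rcases Finset.mem_insert.mp hz1' with h | h
          · exact h
          · exact absurd h (Finset.mem_compl.mp h1)
    have hsplit : (symmDiff M' U').card = (M' \ U').card + (U' \ M').card := by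
      rw [symmDiff_def]
      exact Finset.card_union_of_disjoint (disjoint_sdiff_sdiff)
    have hcompl : ((S.1)ᶜ).card = Fintype.card V - S.1.card := Finset.card_compl _
    have hzero : (M' \ U').card = 0 := by omega
    rw [Finset.card_eq_zero, Finset.sdiff_eq_empty_iff_subset] at hzero
    exact hzero
  have hdisj : ∀ M' : Finset V', IsMinimalMem F' M' → Disjoint (U')ᶜ M' := by
    intro M' hM'
    rw [Finset.disjoint_left]
    intro a ha hm
    exact (Finset.mem_compl.mp ha) (MsubU' M' hM' hm)
  have hmemb : ∀ T : Finset V', T ∈ F' → symmDiff T (U')ᶜ ∈ F' := by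
    intro T hT
    obtain ⟨M, hMT, hMmin⟩ := exists_minimal hT
    refine hsup' hMmin.1 ?_
    intro a ha
    refine Finset.mem_symmDiff.mpr (Or.inl ⟨hMT ha, ?_⟩)
    intro h
    exact (Finset.mem_compl.mp h) (MsubU' M hMmin ha)
  have hcardψ : ∀ S : {S : Finset V // S ∈ F},
      (symmDiff (φ S).1 (U')ᶜ).card = S.1.card := by
    intro S
    rw [symmDiff_compl_eq, Finset.card_compl, hdist S]
    have h1 : S.1.card ≤ Fintype.card V := Finset.card_le_univ S.1
    omega
  have hcancel : ∀ T : Finset V', symmDiff (symmDiff T (U')ᶜ) (U')ᶜ = T := fun T =>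
    symmDiff_symmDiff_cancel_right (U')ᶜ T
  refine ⟨hcard, hdisj, ⟨⟨⟨fun S => ⟨symmDiff (φ S).1 (U')ᶜ, hmemb _ (φ S).2⟩,
    fun T => φ.symm ⟨symmDiff T.1 (U')ᶜ, hmemb _ T.2⟩, ?_, ?_⟩, ?_⟩,
    fun S => ⟨rfl, hcardψ S⟩⟩⟩
  · intro S
    simp only
    have heq : (⟨symmDiff (symmDiff (φ S).1 (U')ᶜ) (U')ᶜ,
        hmemb _ (hmemb _ (φ S).2)⟩ : {T : Finset V' // T ∈ F'}) = φ S :=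
      Subtype.ext (hcancel _)
    rw [heq, RelIso.symm_apply_apply]
  · intro T
    simp only
    apply Subtype.ext
    simp only [RelIso.apply_symm_apply]
    exact hcancel T.1
  · intro S T
    show (symmDiff (symmDiff (φ S).1 (U')ᶜ) (symmDiff (φ T).1 (U')ᶜ)).card = 1
      ↔ (symmDiff S.1 T.1).card = 1
    rw [symmDiff_symmDiff_symmDiff_comm, symmDiff_self, symmDiff_bot,
      iso_symmDiff_eq hsup hsup' φ S T]
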